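/- Let S be a commutative ring with identity, R a unitary subring of S, and I and J ideals of S such that (I ∩ R) + (J ∩ R) = R. Then (R + I) ∩ (R + J) = R + IJ, and (R + I :_S S)·(R + J :_S S) ⊆ (R + IJ :_S S). -/

import Mathlib

/-- The conductor `(A :_S S) = {x ∈ S | x * S ⊆ A}` of an additive subgroup `A` of `S`,
as an ideal of `S`. -/
def condIdeal {S : Type*} [CommRing S] (A : AddSubgroup S) : Ideal S where
  carrier := {x : S | ∀ s : S, x * s ∈ A}
  add_mem' := by
    intro x y hx hy s
    simpa [add_mul] using A.add_mem (hx s) (hy s)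
  zero_mem' := by
    intro s
    simpa using A.zero_mem
  smul_mem' := by
    intro c x hx s
    have := hx (c * s)
    simpa [smul_eq_mul, mul_assoc, mul_comm, mul_left_comm] using this

/-- `R + I = {r + a | r ∈ R, a ∈ I}` as an additive subgroup of `S`. -/
def addSub {S : Type*} [CommRing S] (R : Subring S) (I : Ideal S) : AddSubgroup S where
  carrier := {x : S | ∃ r ∈ R, ∃ a ∈ I, x = r + a}
  zero_mem' := ⟨0, R.zero_mem, 0, I.zero_mem, by simp⟩
  add_mem' := by
    rintro x y ⟨r, hr, a, ha, rfl⟩ ⟨r', hr', a', ha', rfl⟩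
    exact ⟨r + r', R.add_mem hr hr', a + a', I.add_mem ha ha', by ring⟩
  neg_mem' := by
    rintro x ⟨r, hr, a, ha, rfl⟩
    exact ⟨-r, R.neg_mem hr, -a, I.neg_mem ha, by ring⟩

/-- `I` is an `R`-conductor ideal of `S` if `I = (V :_S S)` for some intermediate ring
`R ⊆ V ⊆ S`. -/
def IsConductorIdeal {S : Type*} [CommRing S] (R : Subring S) (I : Ideal S) : Prop :=
  ∃ V : Subring S, R ≤ V ∧ I = condIdeal V.toAddSubgroup

/-- If `(I ∩ R) + (J ∩ R) = R`, then `(R + I) ∩ (R + J) = R + IJ` and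
`(R + I :_S S) · (R + J :_S S) ⊆ (R + IJ :_S S)`. -/
theorem stmt_5 {S : Type*} [CommRing S] (R : Subring S) (I J : Ideal S)
    (hco : {x : S | ∃ a ∈ R, ∃ b ∈ R, a ∈ I ∧ b ∈ J ∧ x = a + b} = (R : Set S)) :
    (addSub R I : Set S) ∩ (addSub R J : Set S) = (addSub R (I * J) : Set S) ∧
    condIdeal (addSub R I) * condIdeal (addSub R J) ≤ condIdeal (addSub R (I * J)) := by
  have h1 : (1 : S) ∈ {x : S | ∃ a ∈ R, ∃ b ∈ R, a ∈ I ∧ b ∈ J ∧ x = a + b} := by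
    rw [hco]; exact R.one_mem
  obtain ⟨e, heR, f, hfR, heI, hfJ, hef⟩ := h1
  have key : (addSub R I : Set S) ∩ (addSub R J : Set S) = (addSub R (I * J) : Set S) := by
    ext x
    constructor
    · rintro ⟨⟨r, hr, a, ha, hxa⟩, ⟨r', hr', b, hb, hxb⟩⟩
      refine ⟨r' * e + r * f, R.add_mem (R.mul_mem hr' heR) (R.mul_mem hr hfR),
        b * e + a * f, (I * J).add_mem
          (by simpa [mul_comm] using Ideal.mul_mem_mul heI hb)
          (Ideal.mul_mem_mul ha hfJ), ?_⟩
      have : x * (e + f) = (r' * e + r * f) + (b * e + a * f) := by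
        rw [mul_add]
        nth_rewrite 1 [hxb]
        nth_rewrite 1 [hxa]
        ring
      rw [← hef, mul_one] at this
      exact this
    · rintro ⟨r, hr, a, ha, rfl⟩
      have haI : a ∈ I := Ideal.mul_le_left (I := I) (J := J) ha
      have haJ : a ∈ J := Ideal.mul_le_right (I := I) (J := J) ha
      exact ⟨⟨r, hr, a, haI, rfl⟩, ⟨r, hr, a, haJ, rfl⟩⟩
  refine ⟨key, ?_⟩
  rw [Ideal.mul_le]
  intro x hx y hy s
  have hmem : x * y * s ∈ (addSub R I : Set S) ∩ (addSub R J : Set S) := by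
    constructor
    · have := hx (y * s); simpa [mul_assoc] using this
    · have := hy (x * s)
      simpa [mul_assoc, mul_comm, mul_left_comm] using this
  rw [key] at hmem
  exact hmem
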